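/- Let r be a real-valued coherent risk measure on L^p(Ω; ℝ) that is comonotonically additive (r(ξ + η) = r(ξ) + r(η) whenever ξ, η are comonotonic) and admits the exact dual representation r(η) = sup_{ζ∈𝒵} E(−ηζ)/E(ζ) with 𝒵 ⊆ L^q(Ω; ℝ₊), E(ζ) > 0 for all ζ ∈ 𝒵. Let 𝐫 = (r,…,r) have all d components equal to r, let K ⊆ ℝ^d be a deterministic closed convex cone with ℝ₋^d ⊆ K ≠ ℝ^d, and let X ∈ L^p(Ω; ℝ^d) have pairwise comonotonic coordinates. Then ρ_s(X + K) = 𝐫(X) + Ǩ, where Ǩ = {−k : k ∈ K} and X + K is the set-valued portfolio ω ↦ X(ω) + K. -/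

import Mathlib

open MeasureTheory Set Filter
open scoped Pointwise ENNReal RealInnerProductSpace

noncomputable section

/-- `ℝ^d` with the Euclidean norm. -/
abbrev Vec (d : ℕ) := EuclideanSpace ℝ (Fin d)

/-- Effros measurability of a set-valued map: `{ω : X(ω) ∩ G ≠ ∅}` is measurable
for every open `G`. -/
def EffrosMeasurable {Ω : Type*} [MeasurableSpace Ω] {d : ℕ} (X : Ω → Set (Vec d)) : Prop :=
  ∀ G : Set (Vec d), IsOpen G → MeasurableSet {ω | (X ω ∩ G).Nonempty}

/-- A set-valued portfolio: an Effros-measurable map with nonempty closed convex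
lower-set values. -/
structure IsPortfolio {Ω : Type*} [MeasurableSpace Ω] {d : ℕ} (X : Ω → Set (Vec d)) : Prop where
  effros : EffrosMeasurable X
  nonempty : ∀ ω, (X ω).Nonempty
  isClosed : ∀ ω, IsClosed (X ω)
  convex : ∀ ω, Convex ℝ (X ω)
  lower : ∀ ω, ∀ x ∈ X ω, ∀ y : Vec d, (∀ i, y i ≤ x i) → y ∈ X ω

/-- A real-valued coherent risk measure on `L^p(Ω; ℝ)`: monotone (antitone in the gain),
cash invariant, subadditive and positively homogeneous. -/
structure IsCoherentR {Ω : Type*} [MeasurableSpace Ω] (μ : Measure Ω) (p : ℝ≥0∞)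
    (r : (Ω → ℝ) → ℝ) : Prop where
  mono : ∀ ξ η : Ω → ℝ, MemLp ξ p μ → MemLp η p μ → (∀ᵐ ω ∂μ, ξ ω ≤ η ω) → r η ≤ r ξ
  cash : ∀ ξ : Ω → ℝ, MemLp ξ p μ → ∀ c : ℝ, r (fun ω => ξ ω + c) = r ξ - c
  subadd : ∀ ξ η : Ω → ℝ, MemLp ξ p μ → MemLp η p μ →
    r (fun ω => ξ ω + η ω) ≤ r ξ + r η
  homog : ∀ ξ : Ω → ℝ, MemLp ξ p μ → ∀ c : ℝ, 0 < c →
    r (fun ω => c * ξ ω) = c * r ξ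

/-- The selection risk measure `ρ_{s,0}(𝐗)` (real-valued marginal risk measures). -/
def rho0R {Ω : Type*} [MeasurableSpace Ω] (μ : Measure Ω) (p : ℝ≥0∞) {d : ℕ}
    (r : Fin d → (Ω → ℝ) → ℝ) (X : Ω → Set (Vec d)) : Set (Vec d) :=
  {x | ∃ ξ : Ω → Vec d, MemLp ξ p μ ∧ (∀ᵐ ω ∂μ, ξ ω ∈ X ω) ∧
        ∀ i, r i (fun ω => ξ ω i + x i) ≤ 0}

/-- Two random variables are comonotonic if
`(ξ(ω) − ξ(ω'))(η(ω) − η(ω')) ≥ 0` for `P ⊗ P`-a.e. `(ω, ω')`. -/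
def Comonotonic {Ω : Type*} [MeasurableSpace Ω] (μ : Measure Ω) (ξ η : Ω → ℝ) : Prop :=
  ∀ᵐ w ∂(μ.prod μ), 0 ≤ (ξ w.1 - ξ w.2) * (η w.1 - η w.2)

/-- Theorem 5.2: if `𝐫 = (r,…,r)` with `r` comonotonically additive and `X` has
comonotonic coordinates, then `ρ_s(X + K) = 𝐫(X) + Ǩ` for every deterministic
exchange cone `K`. -/
theorem statement11 {Ω : Type*} [MeasurableSpace Ω] (μ : Measure Ω) [IsProbabilityMeasure μ]
    [μ.IsComplete] {d : ℕ} (p q : ℝ≥0∞) (hp : 1 ≤ p) (hpq : 1/p + 1/q = 1)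
    (r : (Ω → ℝ) → ℝ) (hr : IsCoherentR μ p r)
    (hcom : ∀ ξ η : Ω → ℝ, MemLp ξ p μ → MemLp η p μ → Comonotonic μ ξ η →
      r (fun ω => ξ ω + η ω) = r ξ + r η)
    (𝒵 : Set (Ω → ℝ)) (h𝒵 : ∀ ζ ∈ 𝒵, MemLp ζ q μ ∧ (∀ᵐ ω ∂μ, 0 ≤ ζ ω) ∧ 0 < ∫ ω, ζ ω ∂μ)
    (hrep : ∀ η : Ω → ℝ, MemLp η p μ →
      IsLUB ((fun ζ => (∫ ω, -η ω * ζ ω ∂μ) / ∫ ω, ζ ω ∂μ) '' 𝒵) (r η))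
    (K : Set (Vec d)) (hKcl : IsClosed K) (hKconv : Convex ℝ K)
    (hKcone : ∀ c : ℝ, 0 < c → ∀ y ∈ K, c • y ∈ K)
    (hKneg : {y : Vec d | ∀ i, y i ≤ 0} ⊆ K) (hKuniv : K ≠ Set.univ)
    (X : Ω → Vec d) (hX : MemLp X p μ)
    (hcoX : ∀ i j, Comonotonic μ (fun ω => X ω i) (fun ω => X ω j)) :
    closure (rho0R μ p (fun _ => r) (fun ω => (X ω + ·) '' K)) =
      ((WithLp.toLp 2 (fun i => r (fun ω => X ω i)) : Vec d) + ·) '' ((fun k : Vec d => -k) '' K) := by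
  classical
  set rX : Vec d := (WithLp.toLp 2 (fun i => r (fun ω => X ω i)) : Vec d) with hrXdef
  -- basic MemLp facts
  have hproj : ∀ (g : Ω → Vec d), MemLp g p μ → ∀ i : Fin d,
      MemLp (fun ω => g ω i) p μ := fun g hg i =>
    (EuclideanSpace.proj i : Vec d →L[ℝ] ℝ).comp_memLp' hg
  have hXi : ∀ i : Fin d, MemLp (fun ω => X ω i) p μ := hproj X hX
  have hr0 : r (fun _ => (0:ℝ)) = 0 := by
    have h0 : MemLp (fun _ : Ω => (0:ℝ)) p μ := memLp_const 0
    have h2 := hr.homog _ h0 2 two_pos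
    simp only [mul_zero] at h2
    linarith
  have hscale : ∀ (c : ℝ), 0 ≤ c → ∀ f : Ω → ℝ, MemLp f p μ →
      r (fun ω => c * f ω) = c * r f := by
    intro c hc f hf
    rcases hc.eq_or_lt with h | h
    · rw [← h]; simp only [zero_mul]; rw [hr0]
    · exact hr.homog f hf c h
  have hmemS : ∀ (v : Fin d → ℝ) (g : Ω → Vec d), MemLp g p μ → ∀ s : Finset (Fin d),
      MemLp (fun ω => ∑ i ∈ s, v i * g ω i) p μ := by
    intro v g hg s
    exact memLp_finset_sum s (fun i _ => (hproj g hg i).const_mul (v i))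
  -- comonotonicity of weighted partial sums with a single coordinate
  have hcomon : ∀ (v : Fin d → ℝ), (∀ i, 0 ≤ v i) → ∀ (a : Fin d) (s : Finset (Fin d)),
      Comonotonic μ (fun ω => v a * X ω a) (fun ω => ∑ i ∈ s, v i * X ω i) := by
    intro v hv a s
    have hall : ∀ᵐ w ∂(μ.prod μ), ∀ i j,
        0 ≤ (X w.1 i - X w.2 i) * (X w.1 j - X w.2 j) := by
      rw [ae_all_iff]; intro i; rw [ae_all_iff]; intro j; exact hcoX i j
    filter_upwards [hall] with w hw
    have hcalc : (v a * X w.1 a - v a * X w.2 a) *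
        ((∑ i ∈ s, v i * X w.1 i) - ∑ i ∈ s, v i * X w.2 i)
        = ∑ i ∈ s, (v a * v i) * ((X w.1 a - X w.2 a) * (X w.1 i - X w.2 i)) := by
      rw [← Finset.sum_sub_distrib, Finset.mul_sum]
      exact Finset.sum_congr rfl fun i _ => by ring
    rw [hcalc]
    exact Finset.sum_nonneg fun i _ =>
      mul_nonneg (mul_nonneg (hv a) (hv i)) (hw a i)
  -- comonotone additivity on weighted sums of the coordinates of X
  have hsum_eq : ∀ (v : Fin d → ℝ), (∀ i, 0 ≤ v i) → ∀ s : Finset (Fin d),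
      r (fun ω => ∑ i ∈ s, v i * X ω i) = ∑ i ∈ s, v i * r (fun ω => X ω i) := by
    intro v hv s
    induction s using Finset.induction_on with
    | empty => simpa using hr0
    | @insert a s ha ih =>
      calc r (fun ω => ∑ i ∈ insert a s, v i * X ω i)
          = r (fun ω => v a * X ω a + ∑ i ∈ s, v i * X ω i) := by
            congr 1; funext ω; rw [Finset.sum_insert ha]
        _ = r (fun ω => v a * X ω a) + r (fun ω => ∑ i ∈ s, v i * X ω i) :=
            hcom _ _ ((hXi a).const_mul (v a)) (hmemS v X hX s) (hcomon v hv a s)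
        _ = v a * r (fun ω => X ω a) + ∑ i ∈ s, v i * r (fun ω => X ω i) := by
            rw [hscale (v a) (hv a) _ (hXi a), ih]
        _ = ∑ i ∈ insert a s, v i * r (fun ω => X ω i) := by rw [Finset.sum_insert ha]
  -- subadditivity on weighted sums of coordinates of an arbitrary selection
  have hsum_le : ∀ (v : Fin d → ℝ), (∀ i, 0 ≤ v i) → ∀ (g : Ω → Vec d), MemLp g p μ →
      ∀ s : Finset (Fin d),
      r (fun ω => ∑ i ∈ s, v i * g ω i) ≤ ∑ i ∈ s, v i * r (fun ω => g ω i) := by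
    intro v hv g hg s
    induction s using Finset.induction_on with
    | empty => simp only [Finset.sum_empty]; exact hr0.le
    | @insert a s ha ih =>
      calc r (fun ω => ∑ i ∈ insert a s, v i * g ω i)
          = r (fun ω => v a * g ω a + ∑ i ∈ s, v i * g ω i) := by
            congr 1; funext ω; rw [Finset.sum_insert ha]
        _ ≤ r (fun ω => v a * g ω a) + r (fun ω => ∑ i ∈ s, v i * g ω i) :=
            hr.subadd _ _ ((hproj g hg a).const_mul (v a)) (hmemS v g hg s)
        _ ≤ v a * r (fun ω => g ω a) + ∑ i ∈ s, v i * r (fun ω => g ω i) := by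
            rw [hscale (v a) (hv a) _ (hproj g hg a)]
            exact add_le_add_right ih _
        _ = ∑ i ∈ insert a s, v i * r (fun ω => g ω i) := by rw [Finset.sum_insert ha]
  -- the target set
  set M : Set (Vec d) := {x : Vec d | rX - x ∈ K} with hMdef
  have hMcl : IsClosed M := hKcl.preimage (continuous_const.sub continuous_id)
  have hMRHS : ((rX + ·) '' ((fun k : Vec d => -k) '' K)) = M := by
    ext x
    constructor
    · rintro ⟨y, ⟨k, hk, rfl⟩, rfl⟩
      show rX - (rX + -k) ∈ K
      have h : rX - (rX + -k) = k := by module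
      rwa [h]
    · intro hx
      exact ⟨-(rX - x), ⟨rX - x, hx, rfl⟩, by module⟩
  -- the cone K as a ConvexCone
  have h0K : (0 : Vec d) ∈ K := hKneg (by intro i; simp)
  set C : ConvexCone ℝ (Vec d) :=
    { carrier := K
      smul_mem' := fun c hc x hx => hKcone c hc x hx
      add_mem' := fun x hx y hy => by
        have h := hKconv hx hy (by norm_num : (0:ℝ) ≤ 1/2)
          (by norm_num : (0:ℝ) ≤ 1/2) (by norm_num)
        have h2 := hKcone 2 two_pos _ h
        have h3 : (2:ℝ) • ((1/2:ℝ) • x + (1/2:ℝ) • y) = x + y := by module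
        rwa [h3] at h2 } with hCdef
  set P : ProperCone ℝ (Vec d) :=
    { toSubmodule := C.toPointedCone h0K, isClosed' := hKcl } with hPdef
  have hbip := ProperCone.innerDual_innerDual P
  -- first inclusion
  have hsub1 : rho0R μ p (fun _ => r) (fun ω => (X ω + ·) '' K) ⊆ M := by
    rintro x ⟨ξ, hξ, hsel, hcond⟩
    have hξi : ∀ i, MemLp (fun ω => ξ ω i) p μ := hproj ξ hξ
    have hrξ : ∀ i, r (fun ω => ξ ω i) ≤ x i := by
      intro i
      have hc : r (fun ω => ξ ω i + x i) = r (fun ω => ξ ω i) - x i :=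
        hr.cash _ (hξi i) (x i)
      have h0 : r (fun ω => ξ ω i + x i) ≤ 0 := hcond i
      linarith
    have key : ∀ u : Vec d, (∀ y ∈ K, 0 ≤ ⟪y, u⟫) → 0 ≤ ⟪u, rX - x⟫ := by
      intro u hu
      set v : Fin d → ℝ := fun i => -(u i) with hvdef
      have hv : ∀ i, 0 ≤ v i := by
        intro i
        have hmem : (-(EuclideanSpace.single i (1:ℝ)) : Vec d) ∈ K := by
          apply hKneg
          intro j
          by_cases h : j = i <;> simp [EuclideanSpace.single_apply, h]
        have h1 := hu _ hmem
        rw [inner_neg_left, EuclideanSpace.inner_single_left] at h1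
        simp only [map_one, one_mul] at h1
        simp only [hvdef]
        linarith
      have hae : ∀ᵐ ω ∂μ, (∑ i, v i * ξ ω i) ≤ ∑ i, v i * X ω i := by
        filter_upwards [hsel] with ω hω
        obtain ⟨k, hk, hXk⟩ := hω
        have h1 : (0:ℝ) ≤ ⟪(k : Vec d), u⟫ := hu k hk
        rw [PiLp.inner_apply] at h1
        simp only [RCLike.inner_apply, conj_trivial] at h1
        have hxi : ∀ i, ξ ω i = X ω i + k i := by
          intro i; rw [← hXk]; rfl
        have h2 : (∑ i, v i * k i) = -(∑ i, k i * u i) := by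
          rw [← Finset.sum_neg_distrib]
          exact Finset.sum_congr rfl fun i _ => by simp only [hvdef]; ring
        have h3 : (∑ i, v i * ξ ω i) = (∑ i, v i * X ω i) + ∑ i, v i * k i := by
          rw [← Finset.sum_add_distrib]
          exact Finset.sum_congr rfl fun i _ => by rw [hxi i]; ring
        rw [h3, h2]
        linarith [Finset.sum_congr rfl fun i (_ : i ∈ Finset.univ) => mul_comm (k i) (u i)]
      have e1 : (∑ i, v i * rX i) = r (fun ω => ∑ i, v i * X ω i) :=
        (hsum_eq v hv Finset.univ).symm
      have e2 : r (fun ω => ∑ i, v i * X ω i) ≤ r (fun ω => ∑ i, v i * ξ ω i) :=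
        hr.mono _ _ (hmemS v ξ hξ Finset.univ) (hmemS v X hX Finset.univ) hae
      have e3 : r (fun ω => ∑ i, v i * ξ ω i) ≤ ∑ i, v i * r (fun ω => ξ ω i) :=
        hsum_le v hv ξ hξ Finset.univ
      have e4 : (∑ i, v i * r (fun ω => ξ ω i)) ≤ ∑ i, v i * x i :=
        Finset.sum_le_sum fun i _ => mul_le_mul_of_nonneg_left (hrξ i) (hv i)
      have hinner : ⟪u, rX - x⟫ = (∑ i, v i * x i) - ∑ i, v i * rX i := by
        rw [PiLp.inner_apply, ← Finset.sum_sub_distrib]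
        exact Finset.sum_congr rfl fun i _ => by
          simp only [RCLike.inner_apply, conj_trivial, PiLp.sub_apply, hvdef]; ring
      rw [hinner]
      linarith
    have hdd : rX - x ∈
        ProperCone.innerDual ((ProperCone.innerDual (P : Set (Vec d)) : Set (Vec d))) := by
      rw [ProperCone.mem_innerDual]
      intro u hu
      rw [SetLike.mem_coe, ProperCone.mem_innerDual] at hu
      exact key u hu
    rw [hbip] at hdd
    exact hdd
  -- second inclusion
  have hsub2 : M ⊆ rho0R μ p (fun _ => r) (fun ω => (X ω + ·) '' K) := by
    intro x hx
    refine ⟨fun ω => X ω + (rX - x), hX.add (memLp_const _), ?_, ?_⟩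
    · filter_upwards with ω
      exact ⟨rX - x, hx, rfl⟩
    · intro i
      have heq : (fun ω => (X ω + (rX - x)) i + x i) = fun ω => X ω i + rX i := by
        funext ω
        simp only [PiLp.add_apply, PiLp.sub_apply]
        ring
      have hc : r (fun ω => X ω i + rX i) = r (fun ω => X ω i) - rX i :=
        hr.cash _ (hXi i) _
      have hri : rX i = r (fun ω => X ω i) := rfl
      show r (fun ω => (X ω + (rX - x)) i + x i) ≤ 0
      rw [heq, hc, hri, sub_self]
  have hρM : rho0R μ p (fun _ => r) (fun ω => (X ω + ·) '' K) = M :=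
    Set.Subset.antisymm hsub1 hsub2
  rw [hρM, hMcl.closure_eq]
  exact hMRHS.symm
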